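/- Let L be a lattice, let 0, 1 ∈ L with 0 ≠ 1, let n ∈ ℕ, and let τ : L^{n+1} → L be monotone with respect to the componentwise order. Suppose a, b, a', b' ∈ L and c̄, c̄' ∈ Lⁿ satisfy τ(a, c̄) = 0, τ(b, c̄) = 1, τ(a', c̄') = 0, τ(b', c̄') = 1, and moreover τ(a', c̄) = 0 holds if and only if τ(b', c̄) = 0 holds. Then the tuples (a, b, c̄) and (a', b', c̄') are incomparable in L^{n+2} with the componentwise order: neither (a, b, c̄) ≤ (a', b', c̄') nor (a', b', c̄') ≤ (a, b, c̄). -/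
import Mathlib

universe u

/-- The key incomparability step: if a monotone `τ : L^{n+1} → L` separates `a` from `b`
over `c̄` and `a'` from `b'` over `c̄'` (with values `0` and `1`, `0 ≠ 1`), and `a'`, `b'`
behave alike in `τ(·, c̄)` as far as the value `0` is concerned, then the tuples
`(a, b, c̄)` and `(a', b', c̄')` are incomparable in `L^{n+2}`. -/
theorem stmt3 {L : Type u} [Lattice L] (z o : L) (hzo : z ≠ o) (n : ℕ)
    (τ : (Fin (n + 1) → L) → L) (hτ : Monotone τ)
    (a b a' b' : L) (c c' : Fin n → L)
    (h1 : τ (Fin.cons a c) = z) (h2 : τ (Fin.cons b c) = o)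
    (h3 : τ (Fin.cons a' c') = z) (h4 : τ (Fin.cons b' c') = o)
    (h5 : τ (Fin.cons a' c) = z ↔ τ (Fin.cons b' c) = z) :
    ¬ (Fin.cons a (Fin.cons b c) : Fin (n + 2) → L) ≤ Fin.cons a' (Fin.cons b' c') ∧
    ¬ (Fin.cons a' (Fin.cons b' c') : Fin (n + 2) → L) ≤ Fin.cons a (Fin.cons b c) := by
  constructor
  · intro h
    rw [Fin.cons_le_cons, Fin.cons_le_cons] at h
    obtain ⟨haa, hbb, hcc⟩ := h
    have hA : τ (Fin.cons a' c) = z := le_antisymm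
      (h3 ▸ hτ (Fin.cons_le_cons.mpr ⟨le_rfl, hcc⟩))
      (h1 ▸ hτ (Fin.cons_le_cons.mpr ⟨haa, le_rfl⟩))
    have hB : τ (Fin.cons b' c) = o := le_antisymm
      (h4 ▸ hτ (Fin.cons_le_cons.mpr ⟨le_rfl, hcc⟩))
      (h2 ▸ hτ (Fin.cons_le_cons.mpr ⟨hbb, le_rfl⟩))
    exact hzo ((h5.mp hA).symm.trans hB)
  · intro h
    rw [Fin.cons_le_cons, Fin.cons_le_cons] at h
    obtain ⟨haa, hbb, hcc⟩ := h
    have hA : τ (Fin.cons a' c) = z := le_antisymm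
      (h1 ▸ hτ (Fin.cons_le_cons.mpr ⟨haa, le_rfl⟩))
      (h3 ▸ hτ (Fin.cons_le_cons.mpr ⟨le_rfl, hcc⟩))
    have hB : τ (Fin.cons b' c) = o := le_antisymm
      (h2 ▸ hτ (Fin.cons_le_cons.mpr ⟨hbb, le_rfl⟩))
      (h4 ▸ hτ (Fin.cons_le_cons.mpr ⟨le_rfl, hcc⟩))
    exact hzo ((h5.mp hA).symm.trans hB)
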